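/- Let α > 0 and let h : ℝ → ℝ satisfy: (i) h(x+1) = h(x) for all x ∈ ℝ; (ii) h(x) = −h(1−x) for all x ∈ [0,1]; (iii) h(z) = z^α · h(2 − 1/z) for all z ∈ [1/2, 1]. Then h(x) = x^α · h(2 − 1/x) for all x ∈ [2, ∞). -/
import Mathlib


/-- Under the hypotheses on the periodically extended `h`, the equation
`h(x) = x^α h(2 - 1/x)` holds for all `x ∈ [2,∞)`. -/
theorem stmt11 (α : ℝ) (hα : 0 < α) (h : ℝ → ℝ)
    (hper : ∀ x : ℝ, h (x + 1) = h x)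
    (hanti : ∀ x : ℝ, 0 ≤ x → x ≤ 1 → h x = -h (1 - x))
    (hfe : ∀ z : ℝ, 1 / 2 ≤ z → z ≤ 1 → h z = z ^ α * h (2 - 1 / z)) :
    ∀ x : ℝ, 2 ≤ x → h x = x ^ α * h (2 - 1 / x) := by
  -- Key lemma: for t ∈ (0, 1/2], h t = (1-t)^α * h (t/(1-t)).
  have key : ∀ t : ℝ, 0 < t → t ≤ 1/2 → h t = (1-t)^α * h (t/(1-t)) := by
    intro t ht ht2
    have h1t : (0:ℝ) < 1 - t := by linarith
    have e1 : h t = -h (1 - t) := hanti t ht.le (by linarith)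
    have e2 : h (1-t) = (1-t)^α * h (2 - 1/(1-t)) := hfe (1-t) (by linarith) (by linarith)
    have e3 : 2 - 1/(1-t) = 1 - t/(1-t) := by field_simp; ring
    have h5 : (0:ℝ) ≤ t/(1-t) := by positivity
    have h6 : t/(1-t) ≤ 1 := by rw [div_le_one h1t]; linarith
    have e4 : h (1 - t/(1-t)) = -h (t/(1-t)) := by
      have := hanti (1 - t/(1-t)) (by linarith) (by linarith)
      rw [this, show 1 - (1 - t/(1-t)) = t/(1-t) by ring]
    rw [e1, e2, e3, e4]; ring
  -- Main induction: for t ∈ (0,1/2] with 1/t ≤ n, h t = -(t^α * h (1/t)).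
  have main : ∀ n : ℕ, ∀ t : ℝ, 0 < t → t ≤ 1/2 → 1/t ≤ n → h t = -(t^α * h (1/t)) := by
    intro n
    induction n with
    | zero =>
      intro t ht _ hn
      exfalso
      have : (0:ℝ) < 1/t := by positivity
      simp only [Nat.cast_zero] at hn
      linarith
    | succ n ih =>
      intro t ht ht2 hn
      have h1t : (0:ℝ) < 1 - t := by linarith
      have hk := key t ht ht2
      have hs0 : (0:ℝ) < t/(1-t) := by positivity
      have hinv : 1/(t/(1-t)) = 1/t - 1 := by field_simp
      have hmul : (1-t)^α * (t/(1-t))^α = t^α := by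
        rw [← Real.mul_rpow h1t.le hs0.le, mul_div_cancel₀ _ (ne_of_gt h1t)]
      have hp : h (1/t - 1) = h (1/t) := by
        have := hper (1/t - 1)
        rw [show 1/t - 1 + 1 = 1/t by ring] at this
        linarith
      by_cases hc : 1/3 ≤ t
      · -- base case: s = t/(1-t) ∈ [1/2, 1]
        have hs1 : 1/2 ≤ t/(1-t) := by rw [le_div_iff₀ h1t]; linarith
        have hs2 : t/(1-t) ≤ 1 := by rw [div_le_one h1t]; linarith
        have e2 := hfe (t/(1-t)) hs1 hs2
        rw [hinv] at e2
        have harg : 2 - (1/t - 1) = 3 - 1/t := by ring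
        rw [harg] at e2
        have hb1 : 1/t ≤ 3 := by rw [div_le_iff₀ ht]; linarith
        have hb2 : (2:ℝ) ≤ 1/t := by rw [le_div_iff₀ ht]; linarith
        have e5 : h (3 - 1/t) = -h (1/t - 2) := by
          have := hanti (3 - 1/t) (by linarith) (by linarith)
          rw [this, show 1 - (3 - 1/t) = 1/t - 2 by ring]
        have p1 : h (1/t - 1) = h (1/t - 2) := by
          have := hper (1/t - 2)
          rw [show 1/t - 2 + 1 = 1/t - 1 by ring] at this
          linarith
        rw [hk, e2, e5, ← p1, hp, ← mul_assoc, hmul]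
        ring
      · -- inductive step: s = t/(1-t) ∈ (0, 1/2)
        push_neg at hc
        have hs2 : t/(1-t) ≤ 1/2 := by
          rw [div_le_div_iff₀ h1t (by norm_num : (0:ℝ) < 2)]; linarith
        have hsn : 1/(t/(1-t)) ≤ n := by
          rw [hinv]
          push_cast
          have : 1/t ≤ (n:ℝ) + 1 := by push_cast at hn; linarith
          linarith
        have e2 := ih (t/(1-t)) hs0 hs2 hsn
        rw [hinv, hp] at e2
        rw [hk, e2, ← mul_neg, ← mul_assoc, hmul]; ring
  -- Conclude
  intro x hx
  have hx0 : (0:ℝ) < x := by linarith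
  have ht0 : (0:ℝ) < 1/x := by positivity
  have ht2 : 1/x ≤ 1/2 := by rw [div_le_div_iff₀ hx0 (by norm_num : (0:ℝ) < 2)]; linarith
  obtain ⟨n, hn⟩ := exists_nat_ge x
  have h1 : 1/(1/x) = x := one_div_one_div x
  have hm := main n (1/x) ht0 ht2 (by rw [h1]; exact hn)
  rw [h1] at hm
  -- h (2 - 1/x) = -h (1/x)
  have hp : h (2 - 1/x) = h (1 - 1/x) := by
    have := hper (1 - 1/x)
    rw [show 1 - 1/x + 1 = 2 - 1/x by ring] at this
    exact this
  have ha : h (1 - 1/x) = -h (1/x) := by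
    have := hanti (1 - 1/x) (by linarith) (by linarith)
    rw [this, show 1 - (1 - 1/x) = 1/x by ring]
  rw [hp, ha, hm]
  have hmul : x^α * (1/x)^α = 1 := by
    rw [← Real.mul_rpow hx0.le ht0.le, mul_one_div_cancel (ne_of_gt hx0), Real.one_rpow]
  calc h x = 1 * h x := by ring
    _ = x^α * (1/x)^α * h x := by rw [hmul]
    _ = x ^ α * -(-((1/x)^α * h x)) := by ring
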